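/- Let A, B be finite subsets of an abelian group, G ⊆ A × B, A' ⊆ A, H ⊆ A' × A', and K > 0 a real number. If every pair (a₁, a₂) ∈ H has joint G-degree at least K, then |A' −_H A'| ≤ |A −_G B|² / K. In particular, if every pair of elements of A' has joint G-degree at least K, then |A' − A'| ≤ |A −_G B|² / K. -/

import Mathlib

theorem key12 {G : Type*} [AddCommGroup G] [DecidableEq G]
    (B : Finset G) (Γ H : Finset (G × G)) (K : ℝ) (hK : 0 < K)
    (h : ∀ x ∈ H,
        K ≤ (((B.filter fun b => (x.1, b) ∈ Γ) ∩ (B.filter fun b => (x.2, b) ∈ Γ)).card : ℝ)) :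
    ((H.image fun x => x.1 - x.2).card : ℝ) ≤
      ((Γ.image fun x => x.1 - x.2).card : ℝ) ^ 2 / K := by
  set D := Γ.image fun x : G × G => x.1 - x.2 with hD
  set E := H.image fun x : G × G => x.1 - x.2 with hE
  rw [le_div_iff₀ hK]
  have hsum : ((D ×ˢ D).filter fun p => p.1 - p.2 ∈ E).card
      = ∑ d ∈ E, (((D ×ˢ D).filter fun p => p.1 - p.2 ∈ E).filter fun p => p.1 - p.2 = d).card :=
    Finset.card_eq_sum_card_fiberwise (fun p hp => (Finset.mem_filter.mp hp).2)
  have hfib : ∀ d ∈ E,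
      K ≤ ((((D ×ˢ D).filter fun p => p.1 - p.2 ∈ E).filter fun p => p.1 - p.2 = d).card : ℝ) := by
    intro d hd
    obtain ⟨x, hx, hxd⟩ := Finset.mem_image.mp hd
    refine (h x hx).trans ?_
    have hcard : ((B.filter fun b => (x.1, b) ∈ Γ) ∩ (B.filter fun b => (x.2, b) ∈ Γ)).card ≤
        (((D ×ˢ D).filter fun p => p.1 - p.2 ∈ E).filter fun p => p.1 - p.2 = d).card := by
      apply Finset.card_le_card_of_injOn (fun b => (x.1 - b, x.2 - b))
      · intro b hb
        simp only [Finset.mem_coe, Finset.mem_inter, Finset.mem_filter] at hb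
        have hdiff : (x.1 - b) - (x.2 - b) = d := by
          rw [sub_sub_sub_cancel_right]; exact hxd
        simp only [Finset.mem_coe, Finset.mem_filter, Finset.mem_product]
        refine ⟨⟨⟨?_, ?_⟩, ?_⟩, hdiff⟩
        · exact Finset.mem_image.mpr ⟨(x.1, b), hb.1.2, rfl⟩
        · exact Finset.mem_image.mpr ⟨(x.2, b), hb.2.2, rfl⟩
        · rw [hdiff]; exact hd
      · intro b₁ _ b₂ _ hbe
        have := congrArg Prod.fst hbe
        simpa using this
    exact_mod_cast hcard
  have h1 : (E.card : ℝ) * K ≤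
      ∑ d ∈ E, ((((D ×ˢ D).filter fun p => p.1 - p.2 ∈ E).filter fun p => p.1 - p.2 = d).card : ℝ) := by
    simpa [nsmul_eq_mul] using Finset.card_nsmul_le_sum E _ K hfib
  have h2 : ((D ×ˢ D).filter fun p => p.1 - p.2 ∈ E).card ≤ D.card * D.card :=
    le_trans (Finset.card_filter_le _ _) (le_of_eq (Finset.card_product _ _))
  calc (E.card : ℝ) * K ≤ _ := h1
    _ = (((D ×ˢ D).filter fun p => p.1 - p.2 ∈ E).card : ℝ) := by
        rw [hsum]; push_cast; ring
    _ ≤ (D.card : ℝ) ^ 2 := by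
        rw [sq]; exact_mod_cast h2

theorem stmt12 (G : Type*) [AddCommGroup G] [DecidableEq G]
    (A B : Finset G) (Γ : Finset (G × G)) (hΓ : Γ ⊆ A ×ˢ B)
    (A' : Finset G) (hA' : A' ⊆ A) (H : Finset (G × G)) (hH : H ⊆ A' ×ˢ A')
    (K : ℝ) (hK : 0 < K) :
    ((∀ x ∈ H,
        K ≤ (((B.filter fun b => (x.1, b) ∈ Γ) ∩ (B.filter fun b => (x.2, b) ∈ Γ)).card : ℝ)) →
      ((H.image fun x => x.1 - x.2).card : ℝ) ≤
        ((Γ.image fun x => x.1 - x.2).card : ℝ) ^ 2 / K) ∧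
    ((∀ a₁ ∈ A', ∀ a₂ ∈ A',
        K ≤ (((B.filter fun b => (a₁, b) ∈ Γ) ∩ (B.filter fun b => (a₂, b) ∈ Γ)).card : ℝ)) →
      (((A' ×ˢ A').image fun x => x.1 - x.2).card : ℝ) ≤
        ((Γ.image fun x => x.1 - x.2).card : ℝ) ^ 2 / K) := by
  constructor
  · exact key12 B Γ H K hK
  · intro h
    apply key12 B Γ (A' ×ˢ A') K hK
    intro x hx
    obtain ⟨h1, h2⟩ := Finset.mem_product.mp hx
    exact h x.1 h1 x.2 h2
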